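/- arXiv:2311.00345 — 2 statements merged into one kernel-verified Lean document; each statement's English description precedes it below -/
import Mathlib

section
/- A Hausdorff topological group G is ω-narrow if and only if G is topologically isomorphic to a subgroup of a topological product of some family of second-countable Hausdorff topological groups. -/
open Filter Topology Set Pointwise TopologicalSpace

universe u

section Defs

variable {X : Type*}

/-- A subset `s` of a topological space is countably compact (in the ambient space) if every
countable open cover of `s` (indexed by `ℕ`) has a finite subcover. -/
def IsCountablyCompactIn [TopologicalSpace X] (s : Set X) : Prop :=
  ∀ U : ℕ → Set X, (∀ n, IsOpen (U n)) → s ⊆ ⋃ n, U n → ∃ t : Finset ℕ, s ⊆ ⋃ n ∈ t, U n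

/-- `U` is a q-sequence at `x`: a sequence of open neighbourhoods of `x` such that every
sequence of points chosen from the `U n` has an accumulation (cluster) point in `X`. -/
def IsQSequenceAt [TopologicalSpace X] (x : X) (U : ℕ → Set X) : Prop :=
  (∀ n, IsOpen (U n) ∧ x ∈ U n) ∧
    ∀ u : ℕ → X, (∀ n, u n ∈ U n) → ∃ p : X, MapClusterPt p Filter.atTop u

/-- A space is a q-space if every point has a q-sequence. -/
def QSpace (X : Type*) [TopologicalSpace X] : Prop :=
  ∀ x : X, ∃ U : ℕ → Set X, IsQSequenceAt x U

/-- A space is a strict q-space if every point has a q-sequence whose intersection is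
sequentially compact. -/
def StrictQSpace (X : Type*) [TopologicalSpace X] : Prop :=
  ∀ x : X, ∃ U : ℕ → Set X, IsQSequenceAt x U ∧ IsSeqCompact (⋂ n, U n)

/-- `U` is a strong q-sequence at `x`: a sequence of open neighbourhoods of `x` such that every
sequence of points chosen from the `U n` has a convergent subsequence. -/
def IsStrongQSequenceAt [TopologicalSpace X] (x : X) (U : ℕ → Set X) : Prop :=
  (∀ n, IsOpen (U n) ∧ x ∈ U n) ∧
    ∀ u : ℕ → X, (∀ n, u n ∈ U n) →
      ∃ (p : X) (φ : ℕ → ℕ), StrictMono φ ∧ Filter.Tendsto (u ∘ φ) Filter.atTop (nhds p)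

/-- A space is a strong q-space if every point has a strong q-sequence. -/
def StrongQSpace (X : Type*) [TopologicalSpace X] : Prop :=
  ∀ x : X, ∃ U : ℕ → Set X, IsStrongQSequenceAt x U

/-- A subset `A` is of countable character in `X` if there is a countable family of open
neighbourhoods of `A` such that every open neighbourhood of `A` contains a member of it. -/
def HasCountableCharacter [TopologicalSpace X] (A : Set X) : Prop :=
  ∃ U : ℕ → Set X, (∀ n, IsOpen (U n) ∧ A ⊆ U n) ∧
    ∀ W : Set X, IsOpen W → A ⊆ W → ∃ n, U n ⊆ W

/-- A topological group is ω-balanced if for every neighbourhood `U` of the identity there is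
a countable family `γ` of open neighbourhoods of the identity such that for every `x` some
`V ∈ γ` satisfies `xVx⁻¹ ⊆ U`. -/
def OmegaBalanced (G : Type*) [Group G] [TopologicalSpace G] : Prop :=
  ∀ U : Set G, U ∈ nhds (1 : G) → ∃ γ : Set (Set G), γ.Countable ∧
    (∀ V ∈ γ, IsOpen V ∧ (1 : G) ∈ V) ∧
    ∀ x : G, ∃ V ∈ γ, ∀ v ∈ V, x * v * x⁻¹ ∈ U

/-- A topological group is ω-narrow if for every open neighbourhood `V` of the identity there
is a countable set `A` with `A * V = G`. -/
def OmegaNarrow (G : Type*) [Group G] [TopologicalSpace G] : Prop :=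
  ∀ V : Set G, IsOpen V → (1 : G) ∈ V → ∃ A : Set G, A.Countable ∧ A * V = Set.univ

/-- A topological group is feathered if it has a nonempty compact subset of countable
character. -/
def IsFeathered (G : Type*) [Group G] [TopologicalSpace G] : Prop :=
  ∃ K : Set G, K.Nonempty ∧ IsCompact K ∧ HasCountableCharacter K

/-- A subgroup `H` of a topological group is neutral if for every open neighbourhood `U` of the
identity there is an open neighbourhood `V` of the identity with `HV ⊆ UH`. -/
def IsNeutralSubgroup {G : Type*} [Group G] [TopologicalSpace G] (H : Subgroup G) : Prop :=
  ∀ U : Set G, IsOpen U → (1 : G) ∈ U →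
    ∃ V : Set G, IsOpen V ∧ (1 : G) ∈ V ∧ (H : Set G) * V ⊆ U * (H : Set G)

end Defs

structure SCGroup : Type (u + 1) where
  carrier : Type u
  [grp : Group carrier]
  [top : TopologicalSpace carrier]
  [tgrp : IsTopologicalGroup carrier]
  [t2 : T2Space carrier]
  [sc : SecondCountableTopology carrier]

attribute [instance] SCGroup.grp SCGroup.top SCGroup.tgrp SCGroup.t2 SCGroup.sc

set_option linter.unusedSectionVars false

namespace GuranAux

open Function Uniformity



set_option linter.unusedSectionVars false

section Aux

variable {G : Type*} [Group G] [TopologicalSpace G] [IsTopologicalGroup G]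

lemma exists_symm_mul_subset {U : Set G} (hU : U ∈ 𝓝 (1 : G)) :
    ∃ V : Set G, IsOpen V ∧ (1 : G) ∈ V ∧ V⁻¹ = V ∧ V * V ⊆ U := by
  obtain ⟨V₀, hV₀o, h1, hmul⟩ := exists_open_nhds_one_mul_subset hU
  refine ⟨V₀ ∩ V₀⁻¹, hV₀o.inter hV₀o.inv, ⟨h1, by simpa using h1⟩, ?_, ?_⟩
  · rw [Set.inter_inv, inv_inv, Set.inter_comm]
  · exact (Set.mul_subset_mul Set.inter_subset_left Set.inter_subset_left).trans hmul

lemma mem_symm_iff {V : Set G} (hs : V⁻¹ = V) (z : G) : z ∈ V ↔ z⁻¹ ∈ V := by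
  conv_rhs => rw [← hs]
  exact Set.inv_mem_inv.symm

lemma omegaNarrow_of_surjective {K : Type*} [Group K] [TopologicalSpace K]
    (e : K →* G) (hc : Continuous e) (hs : Surjective e) (h : OmegaNarrow K) :
    OmegaNarrow G := by
  intro V hV h1V
  obtain ⟨A, hA, hAV⟩ := h (e ⁻¹' V) (hV.preimage hc) (by simp [h1V])
  refine ⟨e '' A, hA.image e, Set.eq_univ_iff_forall.2 fun x => ?_⟩
  obtain ⟨y, rfl⟩ := hs x
  have hy : y ∈ A * (e ⁻¹' V) := by rw [hAV]; trivial
  obtain ⟨a, ha, w, hw, rfl⟩ := Set.mem_mul.1 hy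
  exact Set.mem_mul.2 ⟨e a, ⟨a, ha, rfl⟩, e w, hw, (map_mul e a w).symm⟩

lemma balanced_step (hω : OmegaNarrow G) {U : Set G} (hUo : IsOpen U) (h1U : (1 : G) ∈ U) :
    ∃ W : ℕ → Set G,
      (∀ n, IsOpen (W n) ∧ (1 : G) ∈ W n ∧ (W n)⁻¹ = W n ∧ W n * W n ⊆ U) ∧
      ∀ x : G, ∃ n, ∀ v ∈ W n, x * v * x⁻¹ ∈ U := by
  obtain ⟨V, hVo, h1V, hVs, hVU⟩ := exists_symm_mul_subset (hUo.mem_nhds h1U)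
  obtain ⟨V', hV'o, h1V', hV's, hV'V⟩ := exists_symm_mul_subset (hVo.mem_nhds h1V)
  have hV'V' : V' ⊆ V := fun v hv => hV'V (Set.mem_mul.2 ⟨v, hv, 1, h1V', mul_one v⟩)
  have hVU' : V ⊆ U := fun v hv => hVU (Set.mem_mul.2 ⟨v, hv, 1, h1V, mul_one v⟩)
  have hV3 : ∀ a b c : G, a ∈ V' → b ∈ V' → c ∈ V' → a * b * c ∈ U := by
    intro a b c ha hb hc
    exact hVU (Set.mem_mul.2 ⟨a * b, hV'V (Set.mem_mul.2 ⟨a, ha, b, hb, rfl⟩),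
      c, hV'V' hc, rfl⟩)
  obtain ⟨A, hAc, hAV⟩ := hω V' hV'o h1V'
  have hAne : A.Nonempty := by
    have h1 : (1 : G) ∈ A * V' := by rw [hAV]; trivial
    obtain ⟨a, ha, _, _, _⟩ := Set.mem_mul.1 h1
    exact ⟨a, ha⟩
  obtain ⟨e, he⟩ := Set.Countable.exists_eq_range hAc hAne
  refine ⟨fun n => {w | (e n)⁻¹ * w * e n ∈ V'} ∩ V', fun n => ?_, fun x => ?_⟩
  · have hcont : Continuous fun w : G => (e n)⁻¹ * w * e n := by continuity
    refine ⟨(hV'o.preimage hcont).inter hV'o, ⟨by simpa using h1V', h1V'⟩, ?_, ?_⟩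
    · have hsymm : ∀ w : G, ((e n)⁻¹ * w * e n ∈ V' ∧ w ∈ V') ↔
          ((e n)⁻¹ * w⁻¹ * e n ∈ V' ∧ w⁻¹ ∈ V') := by
        intro w
        rw [show (e n)⁻¹ * w⁻¹ * e n = ((e n)⁻¹ * w * e n)⁻¹ by group,
          ← mem_symm_iff hV's, ← mem_symm_iff hV's]
      ext w
      simp only [Set.mem_inv, Set.mem_inter_iff, Set.mem_setOf_eq]
      exact (hsymm w).symm
    · intro z hz
      obtain ⟨p, hp, q, hq, rfl⟩ := Set.mem_mul.1 hz
      exact hVU (Set.mem_mul.2 ⟨p, hV'V' hp.2, q, hV'V' hq.2, rfl⟩)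
  · have hx : x⁻¹ ∈ A * V' := by rw [hAV]; trivial
    obtain ⟨a, ha, v', hv', hav⟩ := Set.mem_mul.1 hx
    rw [he] at ha
    obtain ⟨n, rfl⟩ := ha
    refine ⟨n, fun w hw => ?_⟩
    have h1 : (e n)⁻¹ * w * e n ∈ V' := hw.1
    have hxw : x * w * x⁻¹ = v'⁻¹ * ((e n)⁻¹ * w * e n) * v' := by
      have hxv : x = v'⁻¹ * (e n)⁻¹ := by
        rw [← inv_inv x, ← hav]; group
      rw [hxv]; group
    rw [hxw]
    refine hV3 _ _ _ ?_ h1 hv'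
    rw [← hV's]; exact Set.inv_mem_inv.2 hv'

lemma exists_good_family (hω : OmegaNarrow G) {U : Set G} (hUo : IsOpen U)
    (h1U : (1 : G) ∈ U) :
    ∃ F : ℕ → Set G,
      (∀ n, IsOpen (F n) ∧ (1 : G) ∈ F n ∧ (F n)⁻¹ = F n) ∧ F 0 ⊆ U ∧ Antitone F ∧
      (∀ n, ∃ m, F m * F m ⊆ F n) ∧ (∀ x : G, ∀ n, ∃ m, ∀ v ∈ F m, x * v * x⁻¹ ∈ F n) := by
  classical
  have hstep0 : ∀ P : Set G, ∃ W : ℕ → Set G,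
      (IsOpen P ∧ (1 : G) ∈ P) →
      ((∀ n, IsOpen (W n) ∧ (1 : G) ∈ W n ∧ (W n)⁻¹ = W n ∧ W n * W n ⊆ P) ∧
        ∀ x : G, ∃ n, ∀ v ∈ W n, x * v * x⁻¹ ∈ P) := by
    intro P
    by_cases h : IsOpen P ∧ (1 : G) ∈ P
    · obtain ⟨W, h1, h2⟩ := balanced_step hω h.1 h.2
      exact ⟨W, fun _ => ⟨h1, h2⟩⟩
    · exact ⟨fun _ => P, fun hh => absurd hh h⟩
  choose step hstep using hstep0
  obtain ⟨V₀, hV₀o, h1V₀, hV₀s, hV₀U⟩ := exists_symm_mul_subset (hUo.mem_nhds h1U)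
  have hV₀U' : V₀ ⊆ U := fun v hv => hV₀U (Set.mem_mul.2 ⟨v, hv, 1, h1V₀, mul_one v⟩)
  -- levels
  let lev : ℕ → ℕ → Set G := fun j =>
    Nat.rec (fun _ => V₀) (fun _ ih k => step (ih k.unpair.1) k.unpair.2) j
  have lev_zero : ∀ k, lev 0 k = V₀ := fun _ => rfl
  have lev_succ : ∀ j k, lev (j + 1) k = step (lev j k.unpair.1) k.unpair.2 := fun _ _ => rfl
  have basic : ∀ j k, IsOpen (lev j k) ∧ (1 : G) ∈ lev j k ∧ (lev j k)⁻¹ = lev j k := by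
    intro j
    induction j with
    | zero => exact fun k => ⟨hV₀o, h1V₀, hV₀s⟩
    | succ j ih =>
      intro k
      have h := hstep (lev j k.unpair.1) ⟨(ih _).1, (ih _).2.1⟩
      rw [lev_succ]
      exact ⟨(h.1 _).1, (h.1 _).2.1, (h.1 _).2.2.1⟩
  set F0 : ℕ → Set G := fun n => lev n.unpair.1 n.unpair.2 with hF0
  have hbasic0 : ∀ n, IsOpen (F0 n) ∧ (1 : G) ∈ F0 n ∧ (F0 n)⁻¹ = F0 n :=
    fun n => basic _ _
  have hmul0 : ∀ n, ∃ m, F0 m * F0 m ⊆ F0 n := by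
    intro n
    refine ⟨Nat.pair (n.unpair.1 + 1) (Nat.pair n.unpair.2 0), ?_⟩
    have h := hstep (lev n.unpair.1 n.unpair.2) ⟨(basic _ _).1, (basic _ _).2.1⟩
    have heq : F0 (Nat.pair (n.unpair.1 + 1) (Nat.pair n.unpair.2 0)) =
        step (lev n.unpair.1 n.unpair.2) 0 := by
      rw [hF0]
      simp only [Nat.unpair_pair]
      rw [lev_succ]
      simp [Nat.unpair_pair]
    rw [heq]
    exact (h.1 0).2.2.2
  have hconj0 : ∀ x : G, ∀ n, ∃ m, ∀ v ∈ F0 m, x * v * x⁻¹ ∈ F0 n := by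
    intro x n
    have h := hstep (lev n.unpair.1 n.unpair.2) ⟨(basic _ _).1, (basic _ _).2.1⟩
    obtain ⟨n₀, hn₀⟩ := h.2 x
    refine ⟨Nat.pair (n.unpair.1 + 1) (Nat.pair n.unpair.2 n₀), ?_⟩
    have heq : F0 (Nat.pair (n.unpair.1 + 1) (Nat.pair n.unpair.2 n₀)) =
        step (lev n.unpair.1 n.unpair.2) n₀ := by
      rw [hF0]
      simp only [Nat.unpair_pair]
      rw [lev_succ]
      simp [Nat.unpair_pair]
    rw [heq]
    exact hn₀
  have hF00 : F0 0 = V₀ := by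
    rw [hF0]
    have : Nat.unpair 0 = (0, 0) := rfl
    simp [this, lev_zero]
  -- antitone version
  refine ⟨fun n => ⋂ i ∈ Finset.range (n + 1), F0 i, fun n => ?_, ?_, ?_, ?_, ?_⟩
  · refine ⟨isOpen_biInter_finset fun i _ => (hbasic0 i).1, ?_, ?_⟩
    · exact Set.mem_iInter₂.2 fun i _ => (hbasic0 i).2.1
    · ext w
      simp only [Set.mem_inv, Set.mem_iInter]
      constructor
      · exact fun h i hi => (mem_symm_iff (hbasic0 i).2.2 w).2 (h i hi)
      · exact fun h i hi => (mem_symm_iff (hbasic0 i).2.2 w).1 (h i hi)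
  · intro x hx
    have := Set.mem_iInter₂.1 hx 0 (Finset.mem_range.2 (Nat.succ_pos 0))
    rw [hF00] at this
    exact hV₀U' this
  · intro n m hnm x hx
    exact Set.mem_iInter₂.2 fun i hi => Set.mem_iInter₂.1 hx i
      (Finset.mem_range.2 (lt_of_lt_of_le (Finset.mem_range.1 hi) (Nat.succ_le_succ hnm)))
  · intro n
    choose cm hcm using hmul0
    refine ⟨(Finset.range (n + 1)).sup cm, ?_⟩
    intro z hz
    refine Set.mem_iInter₂.2 fun i hi => ?_
    apply hcm i
    obtain ⟨p, hp, q, hq, rfl⟩ := Set.mem_mul.1 hz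
    have hcmi : cm i ∈ Finset.range ((Finset.range (n + 1)).sup cm + 1) :=
      Finset.mem_range.2 (Nat.lt_succ_of_le (Finset.le_sup hi))
    exact Set.mem_mul.2 ⟨p, Set.mem_iInter₂.1 hp _ hcmi, q, Set.mem_iInter₂.1 hq _ hcmi, rfl⟩
  · intro x n
    choose cc hcc using hconj0 x
    refine ⟨(Finset.range (n + 1)).sup cc, ?_⟩
    intro v hv
    refine Set.mem_iInter₂.2 fun i hi => ?_
    apply hcc i
    have hcci : cc i ∈ Finset.range ((Finset.range (n + 1)).sup cc + 1) :=
      Finset.mem_range.2 (Nat.lt_succ_of_le (Finset.le_sup hi))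
    exact Set.mem_iInter₂.1 hv _ hcci

lemma omegaNarrow_of_separable [SeparableSpace G] : OmegaNarrow G := by
  intro V hV h1V
  obtain ⟨D, hDc, hDd⟩ := TopologicalSpace.exists_countable_dense G
  refine ⟨D, hDc, Set.eq_univ_iff_forall.2 fun x => ?_⟩
  have hSo : IsOpen ((fun d : G => d⁻¹ * x) ⁻¹' V) :=
    hV.preimage (by continuity)
  have hSne : ((fun d : G => d⁻¹ * x) ⁻¹' V).Nonempty := ⟨x, by simpa using h1V⟩
  obtain ⟨d, hdD, hdS⟩ := hDd.exists_mem_open hSo hSne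
  exact Set.mem_mul.2 ⟨d, hdD, d⁻¹ * x, hdS, by group⟩

lemma omegaNarrow_pi {ι : Type*} {H : ι → Type*} [∀ i, Group (H i)]
    [∀ i, TopologicalSpace (H i)] (hn : ∀ i, OmegaNarrow (H i)) :
    OmegaNarrow (∀ i, H i) := by
  classical
  intro V hV h1V
  obtain ⟨I, u, hu, hsub⟩ := isOpen_pi_iff.1 hV 1 h1V
  choose A hAc hAu using fun i : I => hn i (u i) (hu i i.2).1 (hu i i.2).2
  set AA : Set (∀ i, H i) :=
    {g | (∀ i : I, g i ∈ A i) ∧ ∀ i, i ∉ I → g i = 1} with hAA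
  have hAAc : AA.Countable := by
    have : ∀ i : I, Countable ↥(A i) := fun i => (hAc i).to_subtype
    have hcnt : Countable (∀ i : I, ↥(A i)) := inferInstance
    have hinj : Function.Injective (fun g : AA => fun i : I => (⟨g.1 i, g.2.1 i⟩ : ↥(A i))) := by
      intro g g' hgg
      ext i
      by_cases hi : i ∈ I
      · exact congrArg Subtype.val (congrFun hgg ⟨i, hi⟩)
      · rw [g.2.2 i hi, g'.2.2 i hi]
    have := hinj.countable
    exact Set.countable_coe_iff.1 this
  refine ⟨AA, hAAc, Set.eq_univ_iff_forall.2 fun x => ?_⟩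
  have hx : ∀ i : I, x i ∈ A i * u i := fun i => by rw [hAu i]; trivial
  choose a ha v hv hav using fun i : I => Set.mem_mul.1 (hx i)
  set g : ∀ i, H i := fun i => if h : i ∈ I then a ⟨i, h⟩ else 1 with hg
  have hgAA : g ∈ AA := by
    constructor
    · intro i; simp only [hg, dif_pos i.2]; exact ha ⟨i.1, i.2⟩
    · intro i hi; simp [hg, dif_neg hi]
  refine Set.mem_mul.2 ⟨g, hgAA, g⁻¹ * x, ?_, by group⟩
  apply hsub
  intro i hi
  have hi' : i ∈ I := hi
  show (g⁻¹ * x) i ∈ u i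
  have hgi : g i = a ⟨i, hi'⟩ := by simp [hg, dif_pos hi']
  have hkey : (g⁻¹ * x) i = (a ⟨i, hi'⟩)⁻¹ * x i := by
    simp [Pi.mul_apply, Pi.inv_apply, hgi]
  rw [hkey, ← hav ⟨i, hi'⟩]
  simpa using hv ⟨i, hi'⟩

lemma omegaNarrow_subgroup {M : Type*} [Group M] [TopologicalSpace M] [IsTopologicalGroup M]
    (h : OmegaNarrow M) (K : Subgroup M) : OmegaNarrow K := by
  classical
  intro V hV h1V
  obtain ⟨U, hUo, hUV⟩ := isOpen_induced_iff.1 hV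
  have h1U : (1 : M) ∈ U := by
    have : ((1 : K) : M) ∈ U := by
      have := h1V; rw [← hUV] at this; exact this
    simpa using this
  obtain ⟨W, hWo, h1W, hWs, hWU⟩ := exists_symm_mul_subset (hUo.mem_nhds h1U)
  obtain ⟨A, hAc, hAW⟩ := h W hWo h1W
  have pick : ∀ a : M, ∃ k : K, (∃ k' : K, (k' : M) ∈ {a} * W) → (k : M) ∈ {a} * W := by
    intro a
    by_cases hex : ∃ k' : K, (k' : M) ∈ {a} * W
    · obtain ⟨k', hk'⟩ := hex; exact ⟨k', fun _ => hk'⟩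
    · exact ⟨1, fun hx => absurd hx hex⟩
  choose p hp using pick
  refine ⟨p '' A, hAc.image p, Set.eq_univ_iff_forall.2 fun k => ?_⟩
  have hk : (k : M) ∈ A * W := by rw [hAW]; trivial
  obtain ⟨a, ha, w, hw, hkm⟩ := Set.mem_mul.1 hk
  have hpa := hp a ⟨k, Set.mem_mul.2 ⟨a, rfl, w, hw, hkm⟩⟩
  obtain ⟨a', ha', w', hw', hpa'⟩ := Set.mem_mul.1 hpa
  rw [Set.mem_singleton_iff] at ha'
  rw [ha'] at hpa'
  have hmem : ((p a)⁻¹ * k : K) ∈ V := by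
    rw [← hUV]
    show (((p a)⁻¹ * k : K) : M) ∈ U
    apply hWU
    refine Set.mem_mul.2 ⟨w'⁻¹, ?_, w, hw, ?_⟩
    · rw [← hWs]; exact Set.inv_mem_inv.2 hw'
    · push_cast
      rw [← hkm, ← hpa']; group
  refine Set.mem_mul.2 ⟨p a, ⟨a, ha, rfl⟩, (p a)⁻¹ * k, hmem, by group⟩


end Aux

lemma separable_of_omegaNarrow_basis {H : Type*} [Group H] [TopologicalSpace H]
    [IsTopologicalGroup H] (hw : OmegaNarrow H) (b : ℕ → Set H)
    (hb : HasBasis (𝓝 (1 : H)) (fun _ : ℕ => True) b) (hbs : ∀ n, (b n)⁻¹ = b n) :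
    SeparableSpace H := by
  have hbn : ∀ n, (1 : H) ∈ interior (b n) := fun n =>
    mem_interior_iff_mem_nhds.2 (hb.mem_of_mem trivial)
  choose A hAc hAu using fun n => hw (interior (b n)) isOpen_interior (hbn n)
  refine ⟨⟨⋃ n, A n, Set.countable_iUnion hAc, ?_⟩⟩
  rw [dense_iff_inter_open]
  rintro W hWo ⟨x, hx⟩
  have hWn : (fun y => x * y) ⁻¹' W ∈ 𝓝 (1 : H) :=
    ((continuous_mul_left x).continuousAt (x := (1 : H))).preimage_mem_nhds
      (by rw [mul_one]; exact hWo.mem_nhds hx)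
  obtain ⟨n, -, hn⟩ := hb.mem_iff.1 hWn
  have hxm : x ∈ A n * interior (b n) := by rw [hAu n]; trivial
  obtain ⟨a, ha, o, ho, hao⟩ := Set.mem_mul.1 hxm
  refine ⟨a, ?_, Set.mem_iUnion.2 ⟨n, ha⟩⟩
  have hobn : o⁻¹ ∈ b n := (mem_symm_iff (hbs n) o).1 (interior_subset ho)
  have hmem : x * o⁻¹ ∈ W := hn hobn
  have haeq : a = x * o⁻¹ := by rw [← hao]; group
  rwa [← haeq] at hmem

lemma main_step {G : Type u} [Group G] [TopologicalSpace G] [IsTopologicalGroup G]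
    (hw : OmegaNarrow G) {U : Set G} (hUo : IsOpen U) (h1U : (1 : G) ∈ U) :
    ∃ (H : SCGroup.{u}) (f : G →* H.carrier),
      Continuous f ∧ ∃ W ∈ 𝓝 (1 : H.carrier), f ⁻¹' W ⊆ U := by
  classical
  obtain ⟨F, hF, hF0U, hFanti, hFmul, hFconj⟩ := exists_good_family hw hUo h1U
  set N : Subgroup G :=
    { carrier := ⋂ n, F n
      one_mem' := Set.mem_iInter.2 fun n => (hF n).2.1
      mul_mem' := by
        intro a b ha hb
        refine Set.mem_iInter.2 fun n => ?_
        obtain ⟨m, hm⟩ := hFmul n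
        exact hm (Set.mem_mul.2 ⟨a, Set.mem_iInter.1 ha m, b, Set.mem_iInter.1 hb m, rfl⟩)
      inv_mem' := by
        intro a ha
        refine Set.mem_iInter.2 fun n => ?_
        exact (mem_symm_iff (hF n).2.2 a).1 (Set.mem_iInter.1 ha n) } with hNdef
  haveI hNnormal : N.Normal := by
    constructor
    intro x hx g
    refine Set.mem_iInter.2 fun n => ?_
    obtain ⟨m, hm⟩ := hFconj g n
    exact hm x (Set.mem_iInter.1 hx m)
  set π : G →* G ⧸ N := QuotientGroup.mk' N with hπ
  have hπsurj : Surjective π := QuotientGroup.mk'_surjective N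
  have hNsub : ∀ n, (N : Set G) ⊆ F n := fun n x hx => Set.mem_iInter.1 hx n
  have hpre : ∀ {n m : ℕ}, F m * F m ⊆ F n → π ⁻¹' (π '' F m) ⊆ F n := by
    intro n m hmn g hg
    obtain ⟨v, hv, hveq⟩ := hg
    obtain ⟨z, hz, hzeq⟩ := (QuotientGroup.mk'_eq_mk' (N := N)).1 hveq
    rw [← hzeq]
    exact hmn (Set.mem_mul.2 ⟨v, hv, z, hNsub m hz, rfl⟩)
  have himg_symm : ∀ n, (π '' F n)⁻¹ = π '' F n := by
    intro n
    ext y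
    simp only [Set.mem_inv]
    constructor
    · rintro ⟨v, hv, hveq⟩
      refine ⟨v⁻¹, (mem_symm_iff (hF n).2.2 v).1 hv, ?_⟩
      rw [map_inv, hveq, inv_inv]
    · rintro ⟨v, hv, hveq⟩
      refine ⟨v⁻¹, (mem_symm_iff (hF n).2.2 v).1 hv, ?_⟩
      rw [map_inv, ← hveq]
  set B : GroupFilterBasis (G ⧸ N) :=
    { sets := Set.range fun n => π '' F n
      nonempty := ⟨π '' F 0, 0, rfl⟩
      inter_sets := by
        rintro x y ⟨n, rfl⟩ ⟨k, rfl⟩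
        exact ⟨π '' F (max n k), ⟨max n k, rfl⟩,
          Set.subset_inter (Set.image_mono (hFanti (le_max_left n k)))
            (Set.image_mono (hFanti (le_max_right n k)))⟩
      one' := by
        rintro x ⟨n, rfl⟩
        exact ⟨1, (hF n).2.1, map_one π⟩
      mul' := by
        rintro x ⟨n, rfl⟩
        obtain ⟨m, hm⟩ := hFmul n
        refine ⟨π '' F m, ⟨m, rfl⟩, ?_⟩
        rw [← Set.image_mul]
        exact Set.image_mono hm
      inv' := by
        rintro x ⟨n, rfl⟩
        refine ⟨π '' F n, ⟨n, rfl⟩, ?_⟩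
        intro y hy
        show y⁻¹ ∈ π '' F n
        rw [← himg_symm n]
        simpa using hy
      conj' := by
        intro x₀ x hx
        obtain ⟨n, rfl⟩ := hx
        obtain ⟨g, rfl⟩ := hπsurj x₀
        obtain ⟨m, hm⟩ := hFconj g n
        refine ⟨π '' F m, ⟨m, rfl⟩, ?_⟩
        rintro _ ⟨v, hv, rfl⟩
        show π g * π v * (π g)⁻¹ ∈ π '' F n
        exact ⟨g * v * g⁻¹, hm v hv, by rw [map_mul, map_mul, map_inv]⟩ } with hB
  letI tH : TopologicalSpace (G ⧸ N) := B.topology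
  haveI : IsTopologicalGroup (G ⧸ N) := B.isTopologicalGroup
  have hmemB : ∀ n, (π '' F n) ∈ B := fun n => ⟨n, rfl⟩
  have hBnhds : HasBasis (𝓝 (1 : G ⧸ N)) (fun _ : ℕ => True) (fun n => π '' F n) := by
    constructor
    intro s
    rw [B.nhds_one_hasBasis.mem_iff]
    constructor
    · rintro ⟨V, ⟨n, rfl⟩, hV⟩; exact ⟨n, trivial, hV⟩
    · rintro ⟨n, -, hV⟩; exact ⟨π '' F n, ⟨n, rfl⟩, hV⟩
  have hπcont : Continuous π := by
    apply continuous_of_continuousAt_one π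
    rw [ContinuousAt, map_one, hBnhds.tendsto_right_iff]
    intro n _
    exact mem_of_superset ((hF n).1.mem_nhds (hF n).2.1) (Set.subset_preimage_image π (F n))
  have hwH : OmegaNarrow (G ⧸ N) := omegaNarrow_of_surjective π hπcont hπsurj hw
  haveI hsep : SeparableSpace (G ⧸ N) :=
    separable_of_omegaNarrow_basis hwH _ hBnhds himg_symm
  letI uH : UniformSpace (G ⧸ N) := IsTopologicalGroup.rightUniformSpace (G ⧸ N)
  haveI : (𝓤 (G ⧸ N)).IsCountablyGenerated := by
    rw [uniformity_eq_comap_nhds_one']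
    haveI := hBnhds.isCountablyGenerated
    exact Filter.comap.isCountablyGenerated _ _
  haveI hSC : SecondCountableTopology (G ⧸ N) :=
    UniformSpace.secondCountable_of_separable (G ⧸ N)
  haveI hT2 : T2Space (G ⧸ N) := by
    rw [IsTopologicalGroup.t2Space_iff_one_closed, ← isOpen_compl_iff, isOpen_iff_mem_nhds]
    intro y hy
    obtain ⟨g, rfl⟩ := hπsurj y
    have hgN : g ∉ N := by
      intro hg
      apply hy
      rw [Set.mem_singleton_iff]
      exact (QuotientGroup.eq_one_iff g).2 hg
    obtain ⟨n₀, hn₀⟩ : ∃ n₀, g ∉ F n₀ := by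
      by_contra hc
      push_neg at hc
      exact hgN (Set.mem_iInter.2 hc)
    obtain ⟨m, hm⟩ := hFmul n₀
    rw [(B.nhds_hasBasis (π g)).mem_iff]
    refine ⟨π '' F m, hmemB m, ?_⟩
    rintro _ ⟨_, ⟨v, hv, rfl⟩, rfl⟩
    simp only [Set.mem_compl_iff, Set.mem_singleton_iff]
    intro hcontra
    have hgv : π g = π v⁻¹ := by
      rw [map_inv, eq_inv_iff_mul_eq_one]
      exact hcontra
    obtain ⟨z, hz, hzeq⟩ := (QuotientGroup.mk'_eq_mk' (N := N)).1 hgv.symm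
    apply hn₀
    rw [← hzeq]
    exact hm (Set.mem_mul.2 ⟨v⁻¹, (mem_symm_iff (hF m).2.2 v).1 hv, z, hNsub m hz, rfl⟩)
  obtain ⟨m0, hm0⟩ := hFmul 0
  refine ⟨⟨G ⧸ N⟩, π, hπcont, π '' F m0, B.mem_nhds_one (hmemB m0), ?_⟩
  exact (hpre hm0).trans hF0U

end GuranAux

theorem omegaNarrow_iff_embeds_in_product (G : Type u) [Group G] [TopologicalSpace G]
    [IsTopologicalGroup G] [T2Space G] :
    OmegaNarrow G ↔
      ∃ (ι : Type u) (F : ι → SCGroup.{u}) (f : G →* ∀ i, (F i).carrier),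
        IsEmbedding f := by
  constructor
  · intro hw
    classical
    have h := fun i : {V : Set G // IsOpen V ∧ (1 : G) ∈ V} =>
      GuranAux.main_step hw i.2.1 i.2.2
    choose Fam p hcont W hW hsub using h
    refine ⟨{V : Set G // IsOpen V ∧ (1 : G) ∈ V}, Fam,
      MonoidHom.mk' (fun g i => p i g) (fun a b => funext fun i => map_mul (p i) a b), ?_⟩
    set f : G →* ∀ i : {V : Set G // IsOpen V ∧ (1 : G) ∈ V}, (Fam i).carrier :=
      MonoidHom.mk' (fun g i => p i g) (fun a b => funext fun i => map_mul (p i) a b) with hf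
    have hcontf : Continuous f := continuous_pi fun i => hcont i
    have hkey : 𝓝 (1 : G) = Filter.comap f (𝓝 (f 1)) := by
      apply le_antisymm
      · exact (hcontf.tendsto 1).le_comap
      · rw [map_one]
        refine fun s hs => Filter.mem_comap.2 ?_
        obtain ⟨U', hU's, hU'o, h1U'⟩ := mem_nhds_iff.1 hs
        set i : {V : Set G // IsOpen V ∧ (1 : G) ∈ V} := ⟨U', hU'o, h1U'⟩
        refine ⟨(fun h => h i) ⁻¹' W i, ?_, ?_⟩
        · exact (continuous_apply i).continuousAt.preimage_mem_nhds (hW i)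
        · exact Set.Subset.trans (fun g hg => hsub i hg) hU's
    have hinj : Function.Injective f := by
      rw [injective_iff_map_eq_one]
      intro a ha
      by_contra hne
      have h1m : (1 : G) ∈ ({a}ᶜ : Set G) := by simp [Ne.symm hne]
      set i : {V : Set G // IsOpen V ∧ (1 : G) ∈ V} := ⟨{a}ᶜ, isOpen_compl_singleton, h1m⟩
      have hpa : p i a = 1 := by
        rw [show p i a = (f a) i from rfl, ha]
        rfl
      have hmem : a ∈ p i ⁻¹' (W i) := by
        rw [Set.mem_preimage, hpa]
        exact mem_of_mem_nhds (hW i)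
      exact hsub i hmem rfl
    have hind : IsInducing f := by
      refine ⟨?_⟩
      refine IsTopologicalGroup.ext inferInstance (topologicalGroup_induced f) ?_
      exact hkey.trans (nhds_induced f 1).symm
    exact ⟨hind, hinj⟩
  · rintro ⟨ι, Fam, f, hf⟩
    have hprod : OmegaNarrow (∀ i, (Fam i).carrier) :=
      GuranAux.omegaNarrow_pi fun i => GuranAux.omegaNarrow_of_separable
    have hrange : OmegaNarrow f.range := GuranAux.omegaNarrow_subgroup hprod f.range
    have hinj := hf.injective
    set e := (MonoidHom.ofInjective hinj).symm.toMonoidHom with he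
    have hfe : ∀ k : f.range, f (e k) = (k : ∀ i, (Fam i).carrier) := by
      intro k
      exact MonoidHom.apply_ofInjective_symm hinj k
    have hecont : Continuous e := by
      rw [hf.toIsInducing.continuous_iff]
      have hcomp : (f ∘ e) = fun k : f.range => (k : ∀ i, (Fam i).carrier) := funext hfe
      rw [hcomp]
      exact continuous_subtype_val
    exact GuranAux.omegaNarrow_of_surjective e hecont
      (MonoidHom.ofInjective hinj).symm.surjective hrange
end

section
/- Let G be an ω-narrow Hausdorff topological group. Then: (a) every Hausdorff topological group H that is the image of G under a continuous surjective group homomorphism is ω-narrow; and (b) if G is first-countable, then G has a countable base (is second-countable). -/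
open Filter Topology Set Pointwise TopologicalSpace

universe u

theorem omegaNarrow_image_and_secondCountable (G : Type u) [Group G]
    [TopologicalSpace G] [IsTopologicalGroup G] [T2Space G] (hG : OmegaNarrow G) :
    (∀ (H : Type u) [Group H] [TopologicalSpace H] [IsTopologicalGroup H] [T2Space H]
        (f : G →* H), Continuous f → Function.Surjective f → OmegaNarrow H) ∧
      (FirstCountableTopology G → SecondCountableTopology G) := by
  constructor
  · intro H _ _ _ _ f hf hsurj V hV h1V
    obtain ⟨A, hAc, hAV⟩ := hG (f ⁻¹' V) (hV.preimage hf) (by simpa using h1V)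
    refine ⟨f '' A, hAc.image f, ?_⟩
    apply Set.eq_univ_of_forall
    intro h
    obtain ⟨g, rfl⟩ := hsurj h
    have : g ∈ A * (f ⁻¹' V) := hAV ▸ Set.mem_univ g
    obtain ⟨a, ha, w, hw, rfl⟩ := this
    exact ⟨f a, Set.mem_image_of_mem f ha, f w, hw, (map_mul f a w).symm⟩
  · intro hfc
    -- countable basis at 1
    obtain ⟨b, hb⟩ := (𝓝 (1 : G)).exists_antitone_basis
    -- build a countable dense set
    have hA : ∀ n : ℕ, ∃ A : Set G, A.Countable ∧ A * interior (b n) = Set.univ := by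
      intro n
      exact hG (interior (b n)) isOpen_interior
        (mem_interior_iff_mem_nhds.2 (hb.mem n))
    choose A hAc hAV using hA
    haveI : SeparableSpace G := by
      refine ⟨⟨⋃ n, A n, Set.countable_iUnion hAc, ?_⟩⟩
      rw [dense_iff_inter_open]
      intro U hU ⟨x, hx⟩
      -- find a basic nbhd W of 1 such that x * W⁻¹ ⊆ U
      have hcont : Continuous fun w : G => x * w⁻¹ := by continuity
      have hmem : (fun w : G => x * w⁻¹) ⁻¹' U ∈ 𝓝 (1 : G) := by
        apply hcont.continuousAt.preimage_mem_nhds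
        simpa using hU.mem_nhds hx
      obtain ⟨n, hn⟩ := hb.mem_iff.1 hmem
      have : x ∈ A n * interior (b n) := (hAV n) ▸ Set.mem_univ x
      obtain ⟨a, ha, v, hv, rfl⟩ := this
      refine ⟨a, ?_, Set.mem_iUnion.2 ⟨n, ha⟩⟩
      have : a * v * v⁻¹ ∈ U := hn (interior_subset hv)
      simpa using this
    letI : UniformSpace G := IsTopologicalGroup.rightUniformSpace G
    haveI : (uniformity G).IsCountablyGenerated := by
      rw [uniformity_eq_comap_nhds_one']
      infer_instance
    exact UniformSpace.secondCountable_of_separable G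
end
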